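/- Suppose (π_i)_{i=0}^{Q} are nonnegative reals with ∑_{i=0}^{Q} π_i = 1 and π_i ≤ φ π_{i-1} for all 1 ≤ i ≤ Q, where φ > 0. Suppose (π*_i)_{i=0}^{Q} satisfy: π*_i = π*_0 φ^i for 0 ≤ i ≤ k-1, π*_k = 1 - ∑_{i=0}^{k-1} π*_0 φ^i ≥ 0, π*_i = 0 for i > k, with π*_0 = π_0 and ∑ π*_i = 1. Then ∑_{i=0}^{Q} i·π_i ≥ ∑_{i=0}^{Q} i·π*_i. -/

import Mathlib

lemma abel_key (n : ℕ) (f : ℕ → ℝ) :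
    ∑ i ∈ Finset.range n, (i : ℝ) * f i
      = ∑ j ∈ Finset.range n, ∑ i ∈ Finset.Ico (j + 1) n, f i := by
  induction n with
  | zero => simp
  | succ n ih =>
    rw [Finset.sum_range_succ, Finset.sum_range_succ, ih]
    have h1 : ∀ j ∈ Finset.range n,
        ∑ i ∈ Finset.Ico (j + 1) (n + 1), f i
          = (∑ i ∈ Finset.Ico (j + 1) n, f i) + f n := by
      intro j hj
      exact Finset.sum_Ico_succ_top (Finset.mem_range.mp hj) f
    rw [Finset.sum_congr rfl h1, Finset.sum_add_distrib, Finset.sum_const,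
      Finset.card_range]
    simp [nsmul_eq_mul, mul_comm]

/-- Exchange argument: among distributions on `{0,…,Q}` with fixed mass at 0 and the
growth constraint `π i ≤ φ π (i-1)`, the one saturating the bound up to threshold `k`
and vanishing beyond minimizes the mean. -/
theorem stmt_8 (Q k : ℕ) (hk : k ≤ Q) (φ : ℝ) (hφ : 0 < φ) (π πs : ℕ → ℝ)
    (hπ : ∀ i, i ≤ Q → 0 ≤ π i)
    (hsum : ∑ i ∈ Finset.range (Q + 1), π i = 1)
    (hgrow : ∀ i, 1 ≤ i → i ≤ Q → π i ≤ φ * π (i - 1))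
    (h0 : πs 0 = π 0)
    (hlow : ∀ i, i ≤ k - 1 → πs i = πs 0 * φ ^ i)
    (hkval : πs k = 1 - ∑ i ∈ Finset.range k, πs 0 * φ ^ i)
    (hknn : 0 ≤ πs k)
    (habove : ∀ i, k < i → πs i = 0)
    (hsums : ∑ i ∈ Finset.range (Q + 1), πs i = 1) :
    ∑ i ∈ Finset.range (Q + 1), (i : ℝ) * πs i ≤
      ∑ i ∈ Finset.range (Q + 1), (i : ℝ) * π i := by
  -- upper bound π i ≤ π 0 * φ ^ i
  have hbound : ∀ i, i ≤ Q → π i ≤ π 0 * φ ^ i := by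
    intro i
    induction i with
    | zero => simp
    | succ n ihn =>
      intro hn
      have h1 := hgrow (n + 1) (by omega) hn
      simp only [Nat.add_sub_cancel] at h1
      calc π (n + 1) ≤ φ * π n := h1
        _ ≤ φ * (π 0 * φ ^ n) :=
            mul_le_mul_of_nonneg_left (ihn (by omega)) hφ.le
        _ = π 0 * φ ^ (n + 1) := by ring
  rw [abel_key, abel_key]
  apply Finset.sum_le_sum
  intro j hj
  rcases le_or_gt k j with hjk | hjk
  · -- tail of πs is zero
    have hz : ∑ i ∈ Finset.Ico (j + 1) (Q + 1), πs i = 0 := by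
      apply Finset.sum_eq_zero
      intro i hi
      exact habove i (by have := (Finset.mem_Ico.mp hi).1; omega)
    rw [hz]
    refine Finset.sum_nonneg fun i hi => hπ i ?_
    have := (Finset.mem_Ico.mp hi).2; omega
  · -- j < k : compare heads
    have hsplit : ∀ g : ℕ → ℝ,
        (∑ i ∈ Finset.range (j + 1), g i) + ∑ i ∈ Finset.Ico (j + 1) (Q + 1), g i
          = ∑ i ∈ Finset.range (Q + 1), g i := by
      intro g
      rw [Finset.range_eq_Ico, Finset.range_eq_Ico]
      exact Finset.sum_Ico_consecutive g (m := 0) (n := j + 1) (k := Q + 1) (by omega) (by omega)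
    have hhead : ∑ i ∈ Finset.range (j + 1), π i ≤ ∑ i ∈ Finset.range (j + 1), πs i := by
      apply Finset.sum_le_sum
      intro i hi
      have hik : i ≤ k - 1 := by
        have := Finset.mem_range.mp hi; omega
      rw [hlow i hik, h0]
      exact hbound i (by have := Finset.mem_range.mp hi; omega)
    have e1 := hsplit π
    have e2 := hsplit πs
    rw [hsum] at e1
    rw [hsums] at e2
    linarith
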